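/- Let A be a real m × n matrix, b ∈ ℝ^m, α > 0, and μ > 0. Define G_μ(x) = (α/2)‖A x − b‖₂² + Φ_μ(x). Then x̂ ∈ ℝⁿ is a local minimizer of G_μ if and only if |x̂_i| ≠ μ for all i = 1, …, n and α Aᵀ(A x̂ − b) + (2/μ²)(𝟏 − H_μ(x̂)) ∘ x̂ = 0. -/

import Mathlib

/-- Scalar truncated Huber function: φ_μ(t) = min(1, t²/μ²). -/
noncomputable def phiTH (μ t : ℝ) : ℝ := min 1 (t ^ 2 / μ ^ 2)

/-- Truncated Huber penalty: Φ_μ(x) = Σ_i φ_μ(x_i). -/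
noncomputable def PhiTH {n : ℕ} (μ : ℝ) (x : Fin n → ℝ) : ℝ := ∑ i, phiTH μ (x i)

/-- Euclidean norm of a vector. -/
noncomputable def norm2 {m : ℕ} (u : Fin m → ℝ) : ℝ := Real.sqrt (∑ i, (u i) ^ 2)

/-- Filter operator H_μ: (H_μ(x))_i = 0 if |x_i| ≤ μ, and 1 if |x_i| > μ. -/
noncomputable def Hfilter {n : ℕ} (μ : ℝ) (x : Fin n → ℝ) : Fin n → ℝ :=
  fun i => if μ < |x i| then 1 else 0

/-- The objective G_μ(x) = (α/2)‖Ax − b‖₂² + Φ_μ(x). -/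
noncomputable def Gobj {m n : ℕ} (A : Matrix (Fin m) (Fin n) ℝ) (b : Fin m → ℝ)
    (α μ : ℝ) (x : Fin n → ℝ) : ℝ :=
  α / 2 * (norm2 (A.mulVec x - b)) ^ 2 + PhiTH μ x

lemma norm2_sq {m : ℕ} (u : Fin m → ℝ) : (norm2 u) ^ 2 = ∑ i, (u i) ^ 2 :=
  Real.sq_sqrt (Finset.sum_nonneg fun i _ => sq_nonneg _)

lemma abs_le_norm2 {n : ℕ} (u : Fin n → ℝ) (i : Fin n) : |u i| ≤ norm2 u := by
  rw [← Real.sqrt_sq_eq_abs]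
  exact Real.sqrt_le_sqrt (Finset.single_le_sum (fun j _ => sq_nonneg (u j)) (Finset.mem_univ i))

lemma small_pos {a B ε : ℝ} (hε : 0 < ε)
    (h : ∀ t, 0 < t → t < ε → 0 ≤ a * t + B * t ^ 2) : 0 ≤ a := by
  by_contra hneg
  push_neg at hneg
  have hB : (0:ℝ) < |B| + 1 := by positivity
  set t := min (ε/2) (-a/(2*(|B|+1))) with ht
  have ht0 : 0 < t := lt_min (by linarith) (div_pos (by linarith) (by positivity))
  have htε : t < ε := lt_of_le_of_lt (min_le_left _ _) (by linarith)
  have h2 : t ≤ -a/(2*(|B|+1)) := min_le_right _ _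
  have h2' : (2*(|B|+1)) * t ≤ -a := by
    rw [← le_div_iff₀' (by positivity)]; exact h2
  have hBt : B * t ≤ (|B|+1) * t :=
    mul_le_mul_of_nonneg_right (by linarith [le_abs_self B]) ht0.le
  have hmain := h t ht0 htε
  nlinarith

lemma small_neg_coef {a B ε : ℝ} (hε : 0 < ε)
    (h : ∀ t, -ε < t → t < 0 → 0 ≤ a * t + B * t ^ 2) : a ≤ 0 := by
  have h0 : 0 ≤ -a := by
    apply small_pos (B := B) hε
    intro t ht0 htε
    have h2 := h (-t) (by linarith) (by linarith)
    nlinarith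
  linarith

lemma phiTH_of_le {μ t : ℝ} (hμ : 0 < μ) (h : |t| ≤ μ) : phiTH μ t = t ^ 2 / μ ^ 2 := by
  unfold phiTH
  rw [min_eq_right]
  rw [div_le_one (by positivity)]
  nlinarith [abs_nonneg t, sq_abs t]

lemma phiTH_of_ge {μ t : ℝ} (hμ : 0 < μ) (h : μ ≤ |t|) : phiTH μ t = 1 := by
  unfold phiTH
  rw [min_eq_left]
  rw [le_div_iff₀ (by positivity)]
  nlinarith [abs_nonneg t, sq_abs t]

lemma Gobj_sub {m n : ℕ} (A : Matrix (Fin m) (Fin n) ℝ) (b : Fin m → ℝ)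
    (α μ : ℝ) (x xh : Fin n → ℝ) :
    Gobj A b α μ x - Gobj A b α μ xh =
      α / 2 * ∑ j, (A.mulVec (x - xh) j) ^ 2
      + ∑ k, (x k - xh k) * (α * ∑ j, A j k * (A.mulVec xh - b) j)
      + ∑ k, (phiTH μ (x k) - phiTH μ (xh k)) := by
  have key : ∀ j, (A.mulVec x - b) j = (A.mulVec xh - b) j + (A.mulVec (x - xh)) j := by
    intro j
    rw [Matrix.mulVec_sub]
    simp
  have swap : ∑ j, (A.mulVec xh - b) j * (A.mulVec (x - xh)) j
      = ∑ k, (x k - xh k) * (∑ j, A j k * (A.mulVec xh - b) j) := by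
    simp only [Matrix.mulVec, dotProduct, Pi.sub_apply, Finset.mul_sum, Finset.sum_mul]
    rw [Finset.sum_comm]
    refine Finset.sum_congr rfl fun k _ => Finset.sum_congr rfl fun j _ => by ring
  have expand : ∑ j, ((A.mulVec x - b) j) ^ 2
      = ∑ j, ((A.mulVec xh - b) j) ^ 2
        + 2 * ∑ j, (A.mulVec xh - b) j * (A.mulVec (x - xh)) j
        + ∑ j, (A.mulVec (x - xh) j) ^ 2 := by
    have e : ∀ j : Fin m, ((A.mulVec x - b) j) ^ 2
        = ((A.mulVec xh - b) j) ^ 2 + 2 * ((A.mulVec xh - b) j * (A.mulVec (x - xh)) j)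
          + (A.mulVec (x - xh) j) ^ 2 := fun j => by rw [key j]; ring
    rw [Finset.sum_congr rfl fun j _ => e j, Finset.sum_add_distrib, Finset.sum_add_distrib,
      ← Finset.mul_sum]
  have mid : ∑ k, (x k - xh k) * (α * ∑ j, A j k * (A.mulVec xh - b) j)
      = α * ∑ k, (x k - xh k) * ∑ j, A j k * (A.mulVec xh - b) j := by
    rw [Finset.mul_sum]
    exact Finset.sum_congr rfl fun k _ => by ring
  unfold Gobj PhiTH
  rw [norm2_sq, norm2_sq, expand, swap, Finset.sum_sub_distrib, mid]
  ring

lemma update_sub {n : ℕ} (xh : Fin n → ℝ) (i : Fin n) (t : ℝ) (k : Fin n) :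
    Function.update xh i (xh i + t) k - xh k = if k = i then t else 0 := by
  rw [Function.update_apply]
  split_ifs with h
  · subst h; ring
  · ring

lemma Gobj_update {m n : ℕ} (A : Matrix (Fin m) (Fin n) ℝ) (b : Fin m → ℝ)
    (α μ : ℝ) (xh : Fin n → ℝ) (i : Fin n) (t : ℝ) :
    Gobj A b α μ (Function.update xh i (xh i + t)) - Gobj A b α μ xh =
      (α * ∑ j, A j i * (A.mulVec xh - b) j) * t + (α / 2 * ∑ j, (A j i) ^ 2) * t ^ 2
      + (phiTH μ (xh i + t) - phiTH μ (xh i)) := by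
  rw [Gobj_sub]
  have h1 : ∀ j, A.mulVec (Function.update xh i (xh i + t) - xh) j = A j i * t := by
    intro j
    simp only [Matrix.mulVec, dotProduct, Pi.sub_apply]
    have e : ∀ k : Fin n, A j k * (Function.update xh i (xh i + t) k - xh k)
        = if k = i then A j k * t else 0 := by
      intro k
      rw [update_sub xh i t k]
      split_ifs <;> ring
    rw [Finset.sum_congr rfl fun k _ => e k, Finset.sum_ite_eq']
    simp
  have e1 : ∑ j, (A.mulVec (Function.update xh i (xh i + t) - xh) j) ^ 2
      = (∑ j, (A j i) ^ 2) * t ^ 2 := by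
    have e : ∀ j : Fin m, (A.mulVec (Function.update xh i (xh i + t) - xh) j) ^ 2
        = (A j i) ^ 2 * t ^ 2 := fun j => by rw [h1 j]; ring
    rw [Finset.sum_congr rfl fun j _ => e j, ← Finset.sum_mul]
  have e2 : ∑ k, (Function.update xh i (xh i + t) k - xh k)
        * (α * ∑ j, A j k * (A.mulVec xh - b) j)
      = (α * ∑ j, A j i * (A.mulVec xh - b) j) * t := by
    have e : ∀ k : Fin n, (Function.update xh i (xh i + t) k - xh k)
          * (α * ∑ j, A j k * (A.mulVec xh - b) j)
        = if k = i then (α * ∑ j, A j i * (A.mulVec xh - b) j) * t else 0 := by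
      intro k
      rw [update_sub xh i t k]
      split_ifs with h
      · subst h; ring
      · ring
    rw [Finset.sum_congr rfl fun k _ => e k, Finset.sum_ite_eq']
    simp
  have e3 : ∑ k, (phiTH μ (Function.update xh i (xh i + t) k) - phiTH μ (xh k))
      = phiTH μ (xh i + t) - phiTH μ (xh i) := by
    have h3 : ∀ k, phiTH μ (Function.update xh i (xh i + t) k) - phiTH μ (xh k)
        = if k = i then phiTH μ (xh i + t) - phiTH μ (xh i) else 0 := by
      intro k
      rw [Function.update_apply]
      split_ifs with h
      · subst h; rfl
      · ring
    rw [Finset.sum_congr rfl fun k _ => h3 k, Finset.sum_ite_eq']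
    simp
  rw [e1, e2, e3]
  ring

lemma norm2_update {n : ℕ} (xh : Fin n → ℝ) (i : Fin n) (t : ℝ) :
    norm2 (Function.update xh i (xh i + t) - xh) = |t| := by
  unfold norm2
  have h : ∀ k, ((Function.update xh i (xh i + t) - xh) k) ^ 2 = if k = i then t ^ 2 else 0 := by
    intro k
    rw [Pi.sub_apply, update_sub xh i t k]
    split_ifs <;> ring
  rw [Finset.sum_congr rfl fun k _ => h k, Finset.sum_ite_eq']
  simp [Real.sqrt_sq_eq_abs]


theorem stmt15 {m n : ℕ} (A : Matrix (Fin m) (Fin n) ℝ) (b : Fin m → ℝ)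
    (α μ : ℝ) (hα : 0 < α) (hμ : 0 < μ) (xh : Fin n → ℝ) :
    (∃ δ > 0, ∀ x : Fin n → ℝ, norm2 (x - xh) < δ →
      Gobj A b α μ xh ≤ Gobj A b α μ x) ↔
    ((∀ i, |xh i| ≠ μ) ∧
      α • A.transpose.mulVec (A.mulVec xh - b) +
        (fun i => (2 / μ ^ 2) * (1 - Hfilter μ xh i) * xh i) = 0) := by
  constructor
  · rintro ⟨δ, hδpos, hmin⟩
    have step : ∀ (i : Fin n) (t : ℝ), |t| < δ →
        0 ≤ (α * ∑ j, A j i * (A.mulVec xh - b) j) * t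
          + (α / 2 * ∑ j, (A j i) ^ 2) * t ^ 2
          + (phiTH μ (xh i + t) - phiTH μ (xh i)) := by
      intro i t ht
      have h1 := hmin (Function.update xh i (xh i + t)) (by rw [norm2_update]; exact ht)
      have h2 := Gobj_update A b α μ xh i t
      linarith
    have key : ∀ i, |xh i| ≠ μ ∧
        α * (∑ j, A j i * (A.mulVec xh - b) j)
          + (2 / μ ^ 2) * (1 - Hfilter μ xh i) * xh i = 0 := by
      intro i
      set c := α * ∑ j, A j i * (A.mulVec xh - b) j with hc
      set d := α / 2 * ∑ j, (A j i) ^ 2 with hd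
      rcases lt_trichotomy |xh i| μ with hlt | heq | hgt
      · -- |xh i| < μ
        have hH : Hfilter μ xh i = 0 := if_neg (not_lt.mpr hlt.le)
        refine ⟨ne_of_lt hlt, ?_⟩
        have hεpos : 0 < min δ (μ - |xh i|) := lt_min hδpos (by linarith)
        have hige : 0 ≤ c + 2 * xh i / μ ^ 2 := by
          apply small_pos (B := d + 1 / μ ^ 2) hεpos
          intro t ht0 htε
          have h1 : |t| < δ := by
            rw [abs_of_pos ht0]; exact lt_of_lt_of_le htε (min_le_left _ _)
          have h2 : |xh i + t| ≤ μ := by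
            have := lt_of_lt_of_le htε (min_le_right _ _)
            calc |xh i + t| ≤ |xh i| + |t| := abs_add_le _ _
              _ ≤ μ := by rw [abs_of_pos ht0]; linarith
          have h3 := step i t h1
          rw [phiTH_of_le hμ h2, phiTH_of_le hμ hlt.le] at h3
          have heq2 : (c + 2 * xh i / μ ^ 2) * t + (d + 1 / μ ^ 2) * t ^ 2
              = c * t + d * t ^ 2 + ((xh i + t) ^ 2 / μ ^ 2 - (xh i) ^ 2 / μ ^ 2) := by
            field_simp; ring
          rw [heq2, hc, hd]; linarith
        have hile : c + 2 * xh i / μ ^ 2 ≤ 0 := by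
          apply small_neg_coef (B := d + 1 / μ ^ 2) hεpos
          intro t htε ht0
          have h1 : |t| < δ := by
            rw [abs_of_neg ht0]
            have := lt_of_lt_of_le (neg_lt_neg htε) (by simp : -(-(min δ (μ - |xh i|))) ≤ min δ (μ - |xh i|))
            linarith [min_le_left δ (μ - |xh i|)]
          have h2 : |xh i + t| ≤ μ := by
            have h4 : |t| < μ - |xh i| := by
              rw [abs_of_neg ht0]
              have := min_le_right δ (μ - |xh i|)
              linarith
            calc |xh i + t| ≤ |xh i| + |t| := abs_add_le _ _
              _ ≤ μ := by linarith
          have h3 := step i t h1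
          rw [phiTH_of_le hμ h2, phiTH_of_le hμ hlt.le] at h3
          have heq2 : (c + 2 * xh i / μ ^ 2) * t + (d + 1 / μ ^ 2) * t ^ 2
              = c * t + d * t ^ 2 + ((xh i + t) ^ 2 / μ ^ 2 - (xh i) ^ 2 / μ ^ 2) := by
            field_simp; ring
          rw [heq2, hc, hd]; linarith
        have hzero : c + 2 * xh i / μ ^ 2 = 0 := le_antisymm hile hige
        rw [hH]
        linear_combination hzero
      · -- |xh i| = μ : contradiction
        exfalso
        have h2μ : (0:ℝ) < 2 / μ := by positivity
        rcases (abs_eq hμ.le).mp heq with hu | hu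
        · have hge : 0 ≤ c := by
            apply small_pos (B := d) hδpos
            intro t ht0 htε
            have h1 : |t| < δ := by rw [abs_of_pos ht0]; exact htε
            have h2 : μ ≤ |xh i + t| := by
              rw [hu, abs_of_pos (by linarith)]; linarith
            have h3 := step i t h1
            rw [phiTH_of_ge hμ h2, phiTH_of_ge hμ heq.ge] at h3
            rw [hc, hd]; linarith
          have hle : c + 2 / μ ≤ 0 := by
            apply small_neg_coef (B := d + 1 / μ ^ 2) (lt_min hδpos hμ)
            intro t htε ht0
            have hmd := min_le_left δ μ
            have hmμ := min_le_right δ μ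
            have h1 : |t| < δ := by rw [abs_of_neg ht0]; linarith
            have h2 : |xh i + t| ≤ μ := by
              rw [hu, abs_of_pos (by linarith)]; linarith
            have h3 := step i t h1
            rw [phiTH_of_le hμ h2, phiTH_of_ge hμ heq.ge] at h3
            have heq2 : (c + 2 / μ) * t + (d + 1 / μ ^ 2) * t ^ 2
                = c * t + d * t ^ 2 + ((xh i + t) ^ 2 / μ ^ 2 - 1) := by
              rw [hu]; field_simp; ring
            rw [heq2, hc, hd]; linarith
          linarith
        · have hle : c ≤ 0 := by
            apply small_neg_coef (B := d) hδpos
            intro t htε ht0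
            have h1 : |t| < δ := by rw [abs_of_neg ht0]; linarith
            have h2 : μ ≤ |xh i + t| := by
              rw [hu, abs_of_neg (by linarith)]; linarith
            have h3 := step i t h1
            rw [phiTH_of_ge hμ h2, phiTH_of_ge hμ heq.ge] at h3
            rw [hc, hd]; linarith
          have hge : 0 ≤ c - 2 / μ := by
            apply small_pos (B := d + 1 / μ ^ 2) (lt_min hδpos hμ)
            intro t ht0 htε
            have hmd := min_le_left δ μ
            have hmμ := min_le_right δ μ
            have h1 : |t| < δ := by rw [abs_of_pos ht0]; linarith
            have h2 : |xh i + t| ≤ μ := by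
              rw [hu, abs_of_neg (by linarith)]; linarith
            have h3 := step i t h1
            rw [phiTH_of_le hμ h2, phiTH_of_ge hμ heq.ge] at h3
            have heq2 : (c - 2 / μ) * t + (d + 1 / μ ^ 2) * t ^ 2
                = c * t + d * t ^ 2 + ((xh i + t) ^ 2 / μ ^ 2 - 1) := by
              rw [hu]; field_simp; ring
            rw [heq2, hc, hd]; linarith
          linarith
      · -- μ < |xh i|
        have hH : Hfilter μ xh i = 1 := if_pos hgt
        refine ⟨ne_of_gt hgt, ?_⟩
        have hεpos : 0 < min δ (|xh i| - μ) := lt_min hδpos (by linarith)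
        have habs : ∀ t : ℝ, |t| < min δ (|xh i| - μ) → μ ≤ |xh i + t| := by
          intro t ht
          have h4 : |t| < |xh i| - μ := lt_of_lt_of_le ht (min_le_right _ _)
          have h5 : |xh i| - |xh i + t| ≤ |t| := by
            have := abs_sub_abs_le_abs_sub (xh i) (xh i + t)
            simpa using this
          linarith
        have hstep2 : ∀ t : ℝ, |t| < min δ (|xh i| - μ) → 0 ≤ c * t + d * t ^ 2 := by
          intro t ht
          have h1 : |t| < δ := lt_of_lt_of_le ht (min_le_left _ _)
          have h3 := step i t h1
          rw [phiTH_of_ge hμ (habs t ht), phiTH_of_ge hμ hgt.le] at h3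
          rw [hc, hd]; linarith
        have hge : 0 ≤ c := by
          apply small_pos (B := d) hεpos
          intro t ht0 htε
          exact hstep2 t (by rw [abs_of_pos ht0]; exact htε)
        have hle : c ≤ 0 := by
          apply small_neg_coef (B := d) hεpos
          intro t htε ht0
          exact hstep2 t (by rw [abs_of_neg ht0]; linarith)
        have hzero : c = 0 := le_antisymm hle hge
        rw [hH]
        linear_combination hzero
    refine ⟨fun i => (key i).1, funext fun i => ?_⟩
    have hk := (key i).2
    have htr : A.transpose.mulVec (A.mulVec xh - b) i = ∑ j, A j i * (A.mulVec xh - b) j := rfl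
    simp only [Pi.add_apply, Pi.smul_apply, smul_eq_mul, Pi.zero_apply, htr]
    linarith [hk]
  · rintro ⟨hne, hgrad⟩
    have hgrad' : ∀ k, α * (∑ j, A j k * (A.mulVec xh - b) j)
        + (2 / μ ^ 2) * (1 - Hfilter μ xh k) * xh k = 0 := by
      intro k
      have h1 := congrFun hgrad k
      have htr : A.transpose.mulVec (A.mulVec xh - b) k = ∑ j, A j k * (A.mulVec xh - b) j := rfl
      simp only [Pi.add_apply, Pi.smul_apply, smul_eq_mul, Pi.zero_apply, htr] at h1
      linarith [h1]
    set s : Finset ℝ := insert 1 (Finset.univ.image fun i => |(|xh i| - μ)|) with hs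
    have hsne : s.Nonempty := ⟨1, Finset.mem_insert_self _ _⟩
    set δ := s.min' hsne with hδ
    have hδpos : 0 < δ := by
      have hmem := Finset.min'_mem s hsne
      rcases Finset.mem_insert.mp hmem with h | h
      · rw [hδ, h]; norm_num
      · obtain ⟨i, _, hi⟩ := Finset.mem_image.mp h
        rw [hδ, ← hi]
        exact abs_pos.mpr (sub_ne_zero.mpr (hne i))
    have hδle : ∀ i, δ ≤ |(|xh i| - μ)| := fun i =>
      Finset.min'_le s _ (Finset.mem_insert_of_mem
        (Finset.mem_image_of_mem _ (Finset.mem_univ i)))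
    refine ⟨δ, hδpos, ?_⟩
    intro x hx
    have hxi : ∀ i, |x i - xh i| < |(|xh i| - μ)| := by
      intro i
      have h1 : |(x - xh) i| ≤ norm2 (x - xh) := abs_le_norm2 _ i
      rw [Pi.sub_apply] at h1
      exact lt_of_le_of_lt h1 (lt_of_lt_of_le hx (hδle i))
    have hterm : ∀ k, 0 ≤ (x k - xh k) * (α * ∑ j, A j k * (A.mulVec xh - b) j)
        + (phiTH μ (x k) - phiTH μ (xh k)) := by
      intro k
      rcases (hne k).lt_or_gt with hlt | hgt
      · -- |xh k| < μ
        have hH : Hfilter μ xh k = 0 := if_neg (not_lt.mpr hlt.le)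
        have habs : |(|xh k| - μ)| = μ - |xh k| := by
          rw [abs_of_neg (by linarith)]; ring
        have hxk : |x k| ≤ μ := by
          have h1 := hxi k
          rw [habs] at h1
          calc |x k| = |xh k + (x k - xh k)| := by ring_nf
            _ ≤ |xh k| + |x k - xh k| := abs_add_le _ _
            _ ≤ μ := by linarith
        rw [phiTH_of_le hμ hxk, phiTH_of_le hμ hlt.le]
        have hg := hgrad' k
        rw [hH] at hg
        have heq2 : (x k - xh k) * (α * ∑ j, A j k * (A.mulVec xh - b) j)
              + ((x k) ^ 2 / μ ^ 2 - (xh k) ^ 2 / μ ^ 2)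
            = (x k - xh k) ^ 2 / μ ^ 2
              + (x k - xh k) * (α * (∑ j, A j k * (A.mulVec xh - b) j)
                + (2 / μ ^ 2) * (1 - 0) * xh k) := by
          field_simp; ring
        rw [heq2, hg, mul_zero, add_zero]
        positivity
      · -- μ < |xh k|
        have hH : Hfilter μ xh k = 1 := if_pos hgt
        have habs : |(|xh k| - μ)| = |xh k| - μ := abs_of_pos (by linarith)
        have hxk : μ ≤ |x k| := by
          have h1 := hxi k
          rw [habs] at h1
          have h5 : |xh k| - |x k| ≤ |x k - xh k| := by
            have := abs_sub_abs_le_abs_sub (xh k) (x k)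
            rw [abs_sub_comm] at this
            linarith
          linarith
        rw [phiTH_of_ge hμ hxk, phiTH_of_ge hμ hgt.le]
        have hg := hgrad' k
        rw [hH] at hg
        have hc0 : α * (∑ j, A j k * (A.mulVec xh - b) j) = 0 := by
          linear_combination hg
        rw [hc0, mul_zero, sub_self, add_zero]
    have hsum : 0 ≤ ∑ k, ((x k - xh k) * (α * ∑ j, A j k * (A.mulVec xh - b) j)
        + (phiTH μ (x k) - phiTH μ (xh k))) :=
      Finset.sum_nonneg fun k _ => hterm k
    rw [Finset.sum_add_distrib] at hsum
    have hq : 0 ≤ α / 2 * ∑ j, (A.mulVec (x - xh) j) ^ 2 :=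
      mul_nonneg (by positivity) (Finset.sum_nonneg fun j _ => sq_nonneg _)
    have hG := Gobj_sub A b α μ x xh
    linarith
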